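/- arXiv:1802.03828 — 2 statements merged into one kernel-verified Lean document; each statement's English description precedes it below -/
import Mathlib

section
/- For every integer k ≥ 2 and all A ≥ 1, E ≥ k−1 (with k−1 ≤ E), p(k−1, E, 2A) ≤ q^ctd(k,A,E) ≤ p(k−1, E, A), where p(k−1, E, m) denotes the fraction of satisfiable m-tuples of (k−1)-clauses over an E-element variable set. -/
open Filter

/-- A `k`-clause over `n` propositional variables: a set of `k` literals
(pairs of a variable and a sign) over `k` distinct variables. -/
def Clause (n k : ℕ) : Type :=
  {C : Finset (Fin n × Bool) // C.card = k ∧ (C.image Prod.fst).card = k}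

/-- A controlled instance over `A` universal and `E` existential variables,
with `c`-clauses over the existential variables: a function assigning to each
of the `2A` literals over the universal variables a `c`-clause over the
existential variables. (For `k`-clauses in the matrix, take `c = k - 1`.) -/
def CtdInst (A E c : ℕ) : Type := (Fin A × Bool) → Clause E c

/-- The QBF `∀X∃Y F_f` for a controlled instance `f` is true: for every
assignment `I` of the universal variables there is an assignment `J` of the
existential variables such that every clause `l ∨ f(l)` of the matrix is
satisfied by the combined assignment. -/
def CtdTrue {A E c : ℕ} (f : CtdInst A E c) : Prop :=
  ∀ I : Fin A → Bool, ∃ J : Fin E → Bool, ∀ l : Fin A × Bool,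
    I l.1 = l.2 ∨ ∃ p ∈ (f l).val, J p.1 = p.2

/-- `q^ctd(k,A,E)`: the fraction of controlled instances `f` (with
`(k-1)`-clauses over the existential variables) for which `∀X∃Y F_f` is
true. -/
noncomputable def qCtd (k A E : ℕ) : ℝ :=
  (Nat.card {f : CtdInst A E (k - 1) // CtdTrue f} : ℝ) /
    (Nat.card (CtdInst A E (k - 1)) : ℝ)


/-- An assignment `σ` satisfies a clause if it agrees with the clause's sign
on at least one variable of the clause. -/
def ClauseSat {n k : ℕ} (σ : Fin n → Bool) (C : Clause n k) : Prop :=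
  ∃ l ∈ C.val, σ l.1 = l.2

/-- A `k`-CNF formula with `m` clauses (an `m`-tuple of `k`-clauses) is
satisfiable if some assignment satisfies all of its clauses. -/
def CNFSat {n k m : ℕ} (F : Fin m → Clause n k) : Prop :=
  ∃ σ : Fin n → Bool, ∀ i, ClauseSat σ (F i)

/-- `pSat k n m` is the fraction of the `m`-tuples of `k`-clauses over an
`n`-element variable set that are satisfiable. -/
noncomputable def pSat (k n m : ℕ) : ℝ :=
  (Nat.card {F : Fin m → Clause n k // CNFSat F} : ℝ) /
    (Nat.card (Fin m → Clause n k) : ℝ)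

instance clauseFinite (n k : ℕ) : Finite (Clause n k) := by
  unfold Clause; infer_instance

instance ctdInstFinite (A E c : ℕ) : Finite (CtdInst A E c) := by
  unfold CtdInst; infer_instance

lemma clause_nonempty (n k : ℕ) (h : k ≤ n) : Nonempty (Clause n k) := by
  obtain ⟨s, hs, hcard⟩ := Finset.exists_subset_card_eq (s := (Finset.univ : Finset (Fin n)))
    (n := k) (by simpa using h)
  refine ⟨⟨s.image (fun i => (i, true)), ?_, ?_⟩⟩
  · rw [Finset.card_image_of_injective _ (fun a b hab => by simpa using hab), hcard]
  · rw [Finset.image_image]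
    rw [show (Prod.fst ∘ fun i : Fin n => (i, true)) = id from rfl, Finset.image_id]
    exact hcard

/-- for every integer `k ≥ 2` and all `A ≥ 1`, `E ≥ k−1`,
`p(k−1,E,2A) ≤ q^ctd(k,A,E) ≤ p(k−1,E,A)`. -/
theorem stmt_7 (k A E : ℕ) (hk : 2 ≤ k) (hA : 1 ≤ A) (hE : k - 1 ≤ E) :
    pSat (k - 1) E (2 * A) ≤ qCtd k A E ∧ qCtd k A E ≤ pSat (k - 1) E A := by
  have hN : 0 < Nat.card (Clause E (k - 1)) :=
    Nat.card_pos_iff.mpr ⟨clause_nonempty E (k - 1) hE, inferInstance⟩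
  set N : ℕ := Nat.card (Clause E (k - 1)) with hNdef
  have hNR : (0:ℝ) < (N:ℝ) := by exact_mod_cast hN
  have hcardCtd : Nat.card (CtdInst A E (k - 1)) = N ^ (2 * A) := by
    show Nat.card ((Fin A × Bool) → Clause E (k - 1)) = N ^ (2 * A)
    rw [Nat.card_fun]
    congr 1
    simp [Nat.card_eq_fintype_card, mul_comm]
  have hcardFun : ∀ m : ℕ, Nat.card (Fin m → Clause E (k - 1)) = N ^ m := by
    intro m
    rw [Nat.card_fun]
    simp [Nat.card_eq_fintype_card]
    rfl
  let e : (Fin A × Bool) ≃ Fin (2 * A) :=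
    Fintype.equivFinOfCardEq (by simp [mul_comm])
  -- lower bound injection
  have hlow : Nat.card {F : Fin (2 * A) → Clause E (k - 1) // CNFSat F} ≤
      Nat.card {f : CtdInst A E (k - 1) // CtdTrue f} := by
    apply Nat.card_le_card_of_injective
      (f := fun F => ⟨fun l => F.1 (e l), by
        obtain ⟨σ, hσ⟩ := F.2
        intro I
        exact ⟨σ, fun l => Or.inr (hσ (e l))⟩⟩)
    intro F G h
    apply Subtype.ext
    funext i
    have := congrFun (congrArg Subtype.val h) (e.symm i)
    simpa using this
  -- upper bound injection
  have hup : Nat.card {f : CtdInst A E (k - 1) // CtdTrue f} ≤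
      Nat.card ({g : Fin A → Clause E (k - 1) // CNFSat g} × (Fin A → Clause E (k - 1))) := by
    apply Nat.card_le_card_of_injective
      (f := fun f => (⟨fun i => f.1 (i, true), by
        obtain ⟨J, hJ⟩ := f.2 (fun _ => false)
        refine ⟨J, fun i => ?_⟩
        rcases hJ (i, true) with h | h
        · simp at h
        · exact h⟩, fun i => f.1 (i, false)))
    intro f g h
    rw [Prod.ext_iff] at h
    obtain ⟨h1, h2⟩ := h
    apply Subtype.ext
    funext l
    obtain ⟨i, b⟩ := l
    cases b
    · exact congrFun h2 i
    · exact congrFun (congrArg Subtype.val h1) i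
  have hupcard : Nat.card {f : CtdInst A E (k - 1) // CtdTrue f} ≤
      Nat.card {g : Fin A → Clause E (k - 1) // CNFSat g} * N ^ A := by
    calc Nat.card {f : CtdInst A E (k - 1) // CtdTrue f} ≤ _ := hup
    _ = _ := by rw [Nat.card_prod, hcardFun A]
  constructor
  · unfold pSat qCtd
    rw [hcardFun, hcardCtd]
    have : ((Nat.card {F : Fin (2 * A) → Clause E (k - 1) // CNFSat F} : ℕ) : ℝ) ≤
        ((Nat.card {f : CtdInst A E (k - 1) // CtdTrue f} : ℕ) : ℝ) := by exact_mod_cast hlow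
    gcongr
  · unfold pSat qCtd
    rw [hcardFun, hcardCtd]
    rw [div_le_div_iff₀ (by positivity) (by positivity)]
    have h1 : ((Nat.card {f : CtdInst A E (k - 1) // CtdTrue f} : ℕ) : ℝ) ≤
        (Nat.card {g : Fin A → Clause E (k - 1) // CNFSat g} : ℝ) * (N : ℝ) ^ A := by
      exact_mod_cast hupcard
    have h2 : ((N : ℝ)) ^ (2 * A) = (N : ℝ) ^ A * (N : ℝ) ^ A := by
      rw [two_mul, pow_add]
    push_cast
    rw [h2]
    have h3 : (0:ℝ) ≤ (Nat.card {g : Fin A → Clause E (k - 1) // CNFSat g} : ℝ) := by positivity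
    nlinarith [pow_pos hNR A]
end

section
/- Fix k ≥ 2, disjoint variable sets X, Y with |X| = A ≥ 1 and |Y| = E ≥ k−1, and an assignment I : X → Bool. The map sending a controlled instance f to the A-tuple (f(l))_{l}, indexed by the A literals l over X falsified by I, is surjective onto the set of A-tuples of (k−1)-clauses over Y, and all of its fibers have the same cardinality. Consequently, the fraction of controlled instances f for which the formula F_f|_I (the A-tuple of clauses f(l) over those l falsified by I) is satisfiable equals p(k−1, E, A), the fraction of satisfiable A-tuples of (k−1)-clauses over an E-element variable set. -/
lemma clause_nonempty_s19 (E c : ℕ) (h : c ≤ E) : Nonempty (Clause E c) := by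
  obtain ⟨t, -, ht⟩ := Finset.exists_subset_card_eq (s := (Finset.univ : Finset (Fin E))) (n := c)
    (by simpa using h)
  refine ⟨⟨t.image (fun v => (v, true)), ?_, ?_⟩⟩
  · rw [Finset.card_image_of_injective _ (fun a b hab => congrArg Prod.fst hab)]
    exact ht
  · have h2 : (t.image fun v => (v, true)).image Prod.fst = t := by
      rw [Finset.image_image]; ext x; simp
    rw [h2]; exact ht

instance clause_finite (E c : ℕ) : Finite (Clause E c) := by
  unfold Clause; infer_instance

/-- fix `k ≥ 2`, `A ≥ 1`, `E ≥ k−1` and an assignment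
`I : X → Bool`. The map sending a controlled instance `f` to the `A`-tuple
`(f(l))_l`, indexed by the `A` literals `l` over `X` falsified by `I`, is
surjective onto the set of such tuples of `(k−1)`-clauses over `Y`, and all of
its fibers have the same cardinality. Consequently, the fraction of controlled
instances `f` for which `F_f|_I` is satisfiable equals `p(k−1,E,A)`. -/
theorem stmt_19 (k A E : ℕ) (hk : 2 ≤ k) (hA : 1 ≤ A) (hE : k - 1 ≤ E)
    (I : Fin A → Bool) :
    Function.Surjective
      (fun (f : CtdInst A E (k - 1)) (l : {l : Fin A × Bool // I l.1 ≠ l.2}) =>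
        f l.val) ∧
    (∀ y y' : {l : Fin A × Bool // I l.1 ≠ l.2} → Clause E (k - 1),
      Nat.card {f : CtdInst A E (k - 1) //
          (fun l : {l : Fin A × Bool // I l.1 ≠ l.2} => f l.val) = y} =
      Nat.card {f : CtdInst A E (k - 1) //
          (fun l : {l : Fin A × Bool // I l.1 ≠ l.2} => f l.val) = y'}) ∧
    (Nat.card {f : CtdInst A E (k - 1) // ∃ J : Fin E → Bool,
          ∀ l : Fin A × Bool, I l.1 ≠ l.2 → ∃ p ∈ (f l).val, J p.1 = p.2} : ℝ) /
        (Nat.card (CtdInst A E (k - 1)) : ℝ) = pSat (k - 1) E A := by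
  set c := k - 1 with hc
  obtain ⟨c₀⟩ := clause_nonempty_s19 E c (by omega)
  -- key: a literal falsified by I must be (i, !I i)
  have key : ∀ l : Fin A × Bool, I l.1 ≠ l.2 → l = (l.1, !(I l.1)) := by
    rintro ⟨i, b⟩ h
    simp only [Prod.mk.injEq, true_and]
    revert h; cases I i <;> cases b <;> simp
  have key' : ∀ i : Fin A, I i ≠ !(I i) := by
    intro i; cases I i <;> simp
  refine ⟨?_, ?_, ?_⟩
  · -- surjectivity
    intro y
    refine ⟨fun l => if h : I l.1 ≠ l.2 then y ⟨l, h⟩ else c₀, ?_⟩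
    funext s
    exact dif_pos s.prop
  · -- equal fibers
    intro y y'
    have hfib : ∀ y : {l : Fin A × Bool // I l.1 ≠ l.2} → Clause E c,
        Nat.card {f : CtdInst A E c //
            (fun l : {l : Fin A × Bool // I l.1 ≠ l.2} => f l.val) = y} =
          Nat.card ({l : Fin A × Bool // ¬ I l.1 ≠ l.2} → Clause E c) := by
      intro y
      refine Nat.card_congr ⟨fun f t => f.1 t.val,
        fun z => ⟨fun l => if h : I l.1 ≠ l.2 then y ⟨l, h⟩ else z ⟨l, h⟩, ?_⟩,
        ?_, ?_⟩
      · funext s; exact dif_pos s.prop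
      · intro f
        apply Subtype.ext
        funext l
        by_cases h : I l.1 ≠ l.2
        · simp only [dif_pos h]; exact (congrFun f.prop ⟨l, h⟩).symm
        · simp only [dif_neg h]
      · intro z
        funext t
        exact dif_neg t.prop
    rw [hfib y, hfib y']
  · -- the fraction
    set T := {l : Fin A × Bool // ¬ I l.1 ≠ l.2}
    -- total count
    let toF : CtdInst A E c → (Fin A → Clause E c) × (T → Clause E c) :=
      fun f => (fun i => f (i, !(I i)), fun t => f t.val)
    let invF : (Fin A → Clause E c) × (T → Clause E c) → CtdInst A E c :=
      fun p l => if h : I l.1 ≠ l.2 then p.1 l.1 else p.2 ⟨l, h⟩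
    have hleft : Function.LeftInverse invF toF := by
      intro f
      funext l
      show (if h : I l.1 ≠ l.2 then f (l.1, !(I l.1)) else f l) = f l
      by_cases h : I l.1 ≠ l.2
      · simp only [dif_pos h]; rw [← key l h]
      · simp only [dif_neg h]
    have hright : Function.RightInverse invF toF := by
      intro p
      refine Prod.ext ?_ ?_
      · funext i; exact dif_pos (key' i)
      · funext t; exact dif_neg t.prop
    let Φtot : CtdInst A E c ≃ (Fin A → Clause E c) × (T → Clause E c) :=
      ⟨toF, invF, hleft, hright⟩
    have hPiff : ∀ f : CtdInst A E c,
        (∃ J : Fin E → Bool,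
          ∀ l : Fin A × Bool, I l.1 ≠ l.2 → ∃ p ∈ (f l).val, J p.1 = p.2) ↔
        CNFSat (fun i : Fin A => f (i, !(I i))) := by
      intro f
      constructor
      · rintro ⟨J, hJ⟩
        exact ⟨J, fun i => hJ (i, !(I i)) (key' i)⟩
      · rintro ⟨J, hJ⟩
        refine ⟨J, fun l h => ?_⟩
        rw [key l h]
        exact hJ l.1
    have Φsat : {f : CtdInst A E c // ∃ J : Fin E → Bool,
          ∀ l : Fin A × Bool, I l.1 ≠ l.2 → ∃ p ∈ (f l).val, J p.1 = p.2} ≃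
        {g : Fin A → Clause E c // CNFSat g} × (T → Clause E c) := by
      refine ((Φtot.subtypeEquiv
          (q := fun q : (Fin A → Clause E c) × (T → Clause E c) => CNFSat q.1) ?_)).trans
        ⟨fun q => (⟨q.1.1, q.2⟩, q.1.2), fun r => ⟨(r.1.1, r.2), r.1.2⟩,
          fun q => rfl, fun r => rfl⟩
      intro f
      exact hPiff f
    have hT : (0 : ℝ) < (Nat.card (T → Clause E c) : ℝ) := by
      have : Nonempty (T → Clause E c) := ⟨fun _ => c₀⟩
      exact_mod_cast Nat.card_pos
    rw [Nat.card_congr Φsat, Nat.card_congr Φtot, Nat.card_prod, Nat.card_prod]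
    push_cast
    rw [mul_div_mul_right _ _ (ne_of_gt hT)]
    rfl
end
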